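/- Let b be a symmetric bilinear form and ξ a 1-form on a vector space V with dim V ≥ 2, such that the 3-tensor b_{jl} ξ_q − b_{ql} ξ_j is skew-symmetric in (j,l). Then b_{jl} ξ_q = b_{ql} ξ_j for all indices; consequently, if ξ ≠ 0 then b = φ ξ ⊗ ξ for some scalar φ. -/
import Mathlib


/-- Let `b` be a symmetric bilinear form and `ξ` a 1-form on `V` with `dim V ≥ 2`, such
that the 3-tensor `b(x,y) ξ(z) − b(z,y) ξ(x)` is skew-symmetric in its first two
arguments `(x,y)`.  Then `b(x,y) ξ(z) = b(z,y) ξ(x)` for all `x,y,z`; consequently, if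
`ξ ≠ 0` then `b = φ ξ ⊗ ξ` for some scalar `φ`. -/
theorem stmt_9 {V : Type*} [AddCommGroup V] [Module ℝ V] [FiniteDimensional ℝ V]
    (hdim : 2 ≤ Module.finrank ℝ V)
    (b : V →ₗ[ℝ] V →ₗ[ℝ] ℝ) (hbsym : ∀ x y, b x y = b y x)
    (ξ : V →ₗ[ℝ] ℝ)
    (hskew : ∀ x y z,
      b x y * ξ z - b z y * ξ x = -(b y x * ξ z - b z x * ξ y)) :
    (∀ x y z, b x y * ξ z = b z y * ξ x) ∧
    (ξ ≠ 0 → ∃ φ : ℝ, ∀ x y, b x y = φ * ξ x * ξ y) := by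
  have key : ∀ x y z, b x y * ξ z = b z y * ξ x := by
    intro x y z
    have h1 := hskew x y z
    have h2 := hskew x z y
    rw [hbsym y x, hbsym z x] at h1
    rw [hbsym y z, hbsym z x, hbsym y x] at h2
    linarith
  refine ⟨key, fun hξ => ?_⟩
  obtain ⟨x0, hx0⟩ : ∃ x, ξ x ≠ 0 := by
    by_contra h
    push_neg at h
    exact hξ (LinearMap.ext h)
  refine ⟨b x0 x0 / (ξ x0 * ξ x0), fun x y => ?_⟩
  have h1 : b x y * ξ x0 = b x0 y * ξ x := key x y x0
  have h2 : b x0 x0 * ξ y = b x0 y * ξ x0 := by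
    have := key x0 x0 y
    rw [hbsym y x0] at this
    exact this
  field_simp
  linear_combination ξ x0 * h1 - ξ x * h2
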